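/- Let k ≥ 2, let α : Fin k → ℝ be nonincreasing with α_k ≥ 0, let c₁ ≥ … ≥ c_{k−1} ≥ 0 be the other agents' sorted bids, and let v ≥ 0 be an agent's value whose truthful position q satisfies v ≥ c_j for all j ≥ q. Then the truthful utility is nonnegative: v * α_q − ∑_{j=q}^{k−1} c_j * (α_j − α_{j+1}) ≥ 0. (Individual rationality: an agent bidding truthfully never receives negative utility from the conflict-resolution auction.) -/

import Mathlib

/-- Individual rationality of the SocialMAPF conflict-resolution auction
(k = n+1 ≥ 2 agents): with nonincreasing turn rewards `α` (last reward nonnegative)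
and the other agents' sorted nonnegative bids `c`, an agent whose truthful position
`q` satisfies `v ≥ c j` for all bid indices `j ≥ q` obtains nonnegative truthful
utility `v * α q − ∑_{j ≥ q} c j * (α j − α (j+1)) ≥ 0`. -/
theorem socialmapf_individually_rational (n : ℕ) (hn : 1 ≤ n)
    (α : Fin (n + 1) → ℝ) (hα : Antitone α) (hαlast : 0 ≤ α (Fin.last n))
    (c : Fin n → ℝ) (hc : Antitone c) (hc0 : ∀ j, 0 ≤ c j)
    (v : ℝ) (hv : 0 ≤ v)
    (q : Fin (n + 1))
    (hqv : ∀ j : Fin n, q ≤ j.castSucc → c j ≤ v) :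
    0 ≤ v * α q -
        ∑ j ∈ Finset.univ.filter (fun j : Fin n => q ≤ j.castSucc),
          c j * (α j.castSucc - α j.succ) := by
  set S := Finset.univ.filter (fun j : Fin n => q ≤ j.castSucc) with hS
  have hstep : ∑ j ∈ S, c j * (α j.castSucc - α j.succ)
      ≤ ∑ j ∈ S, v * (α j.castSucc - α j.succ) := by
    apply Finset.sum_le_sum
    intro j hj
    have hqj : q ≤ j.castSucc := (Finset.mem_filter.mp hj).2
    have hdiff : 0 ≤ α j.castSucc - α j.succ := by
      have := hα (le_of_lt (Fin.castSucc_lt_succ : j.castSucc < j.succ))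
      linarith
    exact mul_le_mul_of_nonneg_right (hqv j hqj) hdiff
  set g : ℕ → ℝ := fun i => α ⟨min i n, by omega⟩ with hg
  have hqn : (q : ℕ) ≤ n := by omega
  have tele : ∑ j ∈ S, (α j.castSucc - α j.succ) = α q - α (Fin.last n) := by
    have h1 : ∑ j ∈ S, (α j.castSucc - α j.succ)
        = ∑ i ∈ Finset.Ico (q : ℕ) n, (g i - g (i + 1)) := by
      refine Finset.sum_bij' (fun (j : Fin n) (_ : j ∈ S) => (j : ℕ))
        (fun i hi => ⟨i, (Finset.mem_Ico.mp hi).2⟩) ?_ ?_ ?_ ?_ ?_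
      · intro a ha
        rw [Finset.mem_Ico]
        exact ⟨(Finset.mem_filter.mp ha).2, a.isLt⟩
      · intro a ha
        rw [hS, Finset.mem_filter]
        refine ⟨Finset.mem_univ _, ?_⟩
        have := (Finset.mem_Ico.mp ha).1
        simpa [Fin.le_def] using this
      · intro a _; rfl
      · intro a _; rfl
      · intro a ha
        have hal : (a : ℕ) < n := a.isLt
        show α a.castSucc - α a.succ = g (a : ℕ) - g ((a : ℕ) + 1)
        congr 1
        · congr 1; apply Fin.ext; simp [hg] <;> omega
        · congr 1; apply Fin.ext; simp [hg] <;> omega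
    rw [h1, Finset.sum_Ico_eq_sum_range]
    have h2 := Finset.sum_range_sub' (fun i => g ((q : ℕ) + i)) (n - (q : ℕ))
    have h3 : ∀ i, g ((q : ℕ) + i + 1) = g ((q : ℕ) + (i + 1)) := by
      intro i; rfl
    calc ∑ i ∈ Finset.range (n - (q : ℕ)), (g ((q : ℕ) + i) - g ((q : ℕ) + i + 1))
        = ∑ i ∈ Finset.range (n - (q : ℕ)), (g ((q : ℕ) + i) - g ((q : ℕ) + (i + 1))) := by
          apply Finset.sum_congr rfl; intro i _; rw [h3]
      _ = g ((q : ℕ) + 0) - g ((q : ℕ) + (n - (q : ℕ))) := h2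
      _ = α q - α (Fin.last n) := by
          congr 1
          · simp only [hg]; congr 1; apply Fin.ext; simp <;> omega
          · simp only [hg]; congr 1; apply Fin.ext; simp [Fin.last] <;> omega
  calc (0:ℝ) ≤ v * α (Fin.last n) := mul_nonneg hv hαlast
    _ = v * α q - v * (α q - α (Fin.last n)) := by ring
    _ = v * α q - ∑ j ∈ S, v * (α j.castSucc - α j.succ) := by
        rw [← Finset.mul_sum, tele]
    _ ≤ v * α q - ∑ j ∈ S, c j * (α j.castSucc - α j.succ) := by linarith
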